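/- Let η be an admissible map and let Π' ⊆ Π_η be a subset on which ρ_η is injective. Then the family consisting of the vectors ρ_η(α) for α ∈ Π' together with the vectors −ĕ_α for α ∈ Π_η ∖ Π' is a ℤ-basis of the lattice ℤ^{Π_η} of integer-valued functions on Π_η. In particular, the set S(Π') is linearly independent and the cone C_{Π'} generated by S(Π') is regular. -/

import Mathlib

open scoped RealInnerProductSpace Classical

/-- Extraction of a simple cycle from a finite digraph in which every vertex of `t`
has an out-neighbour in `t`. -/
private lemma exists_simple_cycle {α : Type*} (t : Finset α) (E : α → α → Prop)
    (hne : t.Nonempty) (h : ∀ a ∈ t, ∃ b ∈ t, E a b) :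
    ∃ (d : ℕ) (g : ℕ → α), 0 < d ∧ (∀ i, g i ∈ t) ∧ (∀ i, E (g i) (g (i + 1))) ∧
      (∀ i j, i < d → j < d → g i = g j → i = j) ∧ (∀ i, g (i + d) = g i) := by
  classical
  have hf : ∀ a : α, ∃ b : α, a ∈ t → (b ∈ t ∧ E a b) := by
    intro a
    by_cases ha : a ∈ t
    · obtain ⟨b, hb, he⟩ := h a ha
      exact ⟨b, fun _ => ⟨hb, he⟩⟩
    · exact ⟨a, fun hc => absurd hc ha⟩
  choose f hfspec using hf
  obtain ⟨x0, hx0⟩ := hne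
  have hstay : ∀ m (z : α), z ∈ t → f^[m] z ∈ t := by
    intro m
    induction m with
    | zero => intro z hz; exact hz
    | succ m ih =>
      intro z hz
      rw [Function.iterate_succ_apply']
      exact (hfspec _ (ih z hz)).1
  have hmem : ∀ n, f^[n] x0 ∈ t := fun n => hstay n x0 hx0
  have hcard : t.card < (Finset.range (t.card + 1)).card := by simp
  obtain ⟨i, hi, j, hj, hij, heq⟩ :=
    Finset.exists_ne_map_eq_of_card_lt_of_maps_to hcard
      (fun n _ => hmem n : ∀ n ∈ Finset.range (t.card + 1), f^[n] x0 ∈ t)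
  have key : ∃ i j : ℕ, i < j ∧ f^[i] x0 = f^[j] x0 := by
    rcases lt_or_gt_of_ne hij with h' | h'
    · exact ⟨i, j, h', heq⟩
    · exact ⟨j, i, h', heq.symm⟩
  obtain ⟨i, j, hij', heq'⟩ := key
  set y := f^[i] x0 with hy
  have hper0 : f^[j - i] y = y := by
    have h2 : f^[(j - i) + i] x0 = f^[j] x0 := by congr 1; omega
    rw [Function.iterate_add_apply] at h2
    rw [hy, h2, ← heq']
  have hex : ∃ d : ℕ, 0 < d ∧ f^[d] y = y := ⟨j - i, by omega, hper0⟩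
  let d := Nat.find hex
  have hd : 0 < d ∧ f^[d] y = y := Nat.find_spec hex
  have key2 : ∀ a b : ℕ, a < b → b < d → f^[a] y = f^[b] y → False := by
    intro a b hab' hbd habe
    have h1 : f^[d - b + a] y = y := by
      have h3 : f^[d - b + a] y = f^[d - b + b] y := by
        rw [Function.iterate_add_apply, Function.iterate_add_apply, habe]
      have h2 : d - b + b = d := by omega
      rw [h2] at h3
      rw [h3]
      exact hd.2
    exact Nat.find_min hex (by omega : d - b + a < d) ⟨by omega, h1⟩
  refine ⟨d, fun n => f^[n] y, hd.1, fun n => hstay n y (hmem i), fun n => ?_, ?_, fun n => ?_⟩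
  · show E (f^[n] y) (f^[n + 1] y)
    rw [Function.iterate_succ_apply']
    exact (hfspec _ (hstay n y (hmem i))).2
  · intro a b ha hb hab
    rcases Nat.lt_trichotomy a b with h' | h' | h'
    · exact absurd (key2 a b h' hb hab) not_false
    · exact h'
    · exact absurd (key2 b a h' ha hab.symm) not_false
  · show f^[n + d] y = f^[n] y
    rw [Function.iterate_add_apply, hd.2]

/-- Topological sorting of a finite digraph which has a sink in every nonempty subset. -/
private lemma topo_list {α : Type*} [DecidableEq α] (E : α → α → Prop) :
    ∀ s : Finset α, (∀ t : Finset α, t ⊆ s → t.Nonempty → ∃ m ∈ t, ∀ y ∈ t, ¬ E m y) →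
    ∃ l : List α, l.Nodup ∧ (∀ x, x ∈ l ↔ x ∈ s) ∧ l.Pairwise (fun a b => ¬ E a b) := by
  intro s
  induction s using Finset.strongInduction with
  | _ s ih =>
    intro hsink
    rcases s.eq_empty_or_nonempty with rfl | hne
    · exact ⟨[], List.nodup_nil, by simp, List.Pairwise.nil⟩
    · obtain ⟨m, hm, hmnoe⟩ := hsink s (subset_refl s) hne
      obtain ⟨l', hnd', hmem', hpw'⟩ :=
        ih (s.erase m) (Finset.erase_ssubset hm)
          (fun t ht htne => hsink t (ht.trans (Finset.erase_subset m s)) htne)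
      refine ⟨m :: l', ?_, ?_, ?_⟩
      · refine List.nodup_cons.mpr ⟨fun hc => ?_, hnd'⟩
        exact (Finset.notMem_erase m s) ((hmem' m).1 hc)
      · intro x
        simp only [List.mem_cons, hmem' x, Finset.mem_erase]
        constructor
        · rintro (rfl | ⟨_, hx⟩)
          · exact hm
          · exact hx
        · intro hx
          by_cases hxm : x = m
          · exact Or.inl hxm
          · exact Or.inr ⟨hxm, hx⟩
      · refine List.pairwise_cons.mpr ⟨fun b hb => ?_, hpw'⟩
        exact hmnoe b (Finset.mem_erase.mp ((hmem' b).1 hb)).2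

/-- A simple cycle of length `≥ 3` in the "strongly obtuse" graph contradicts
linear independence. -/
private lemma no_geometric_cycle
    {E : Type*} [NormedAddCommGroup E] [InnerProductSpace ℝ E]
    (P : Finset E)
    (h0 : ∀ α ∈ P, α ≠ (0 : E))
    (hli : LinearIndependent ℝ (fun a : P => (a : E)))
    (hobtuse : ∀ α ∈ P, ∀ β ∈ P, α ≠ β → ⟪α, β⟫ ≤ 0)
    (d : ℕ) (hd : 3 ≤ d) (g : ℕ → E) (hgP : ∀ i, g i ∈ P)
    (hginj : ∀ i j, i < d → j < d → g i = g j → i = j)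
    (hper : ∀ i, g (i + d) = g i)
    (hedge : ∀ i, ⟪g i, g (i + 1)⟫ ≤ -(‖g i‖ * ‖g (i + 1)‖) / 2) : False := by
  classical
  set u : ℕ → E := fun i => ‖g i‖⁻¹ • g i with hu
  have hnorm : ∀ i, 0 < ‖g i‖ := fun i => norm_pos_iff.mpr (h0 _ (hgP i))
  have huinner : ∀ i j, ⟪u i, u j⟫ = ‖g i‖⁻¹ * (‖g j‖⁻¹ * ⟪g i, g j⟫) := by
    intro i j
    rw [hu]
    rw [real_inner_smul_left, real_inner_smul_right]
  have huu : ∀ i, ⟪u i, u i⟫ = 1 := by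
    intro i
    rw [huinner, real_inner_self_eq_norm_mul_norm]
    field_simp
    exact div_self (hnorm i).ne'
  have hneg : ∀ i, ⟪u i, u (i + 1)⟫ ≤ -(1 / 2) := by
    intro i
    rw [huinner]
    have ha := hnorm i
    have hb := hnorm (i + 1)
    have he := hedge i
    set a := ‖g i‖
    set b := ‖g (i + 1)‖
    set s := ⟪g i, g (i + 1)⟫
    have h1 : a⁻¹ * (b⁻¹ * s) ≤ a⁻¹ * (b⁻¹ * (-(a * b) / 2)) := by
      apply mul_le_mul_of_nonneg_left _ (by positivity)
      apply mul_le_mul_of_nonneg_left he (by positivity)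
    have h2 : a⁻¹ * (b⁻¹ * (-(a * b) / 2)) = -(1 / 2) := by
      field_simp
    linarith
  have hobt : ∀ i j, i < d → j < d → i ≠ j → ⟪u i, u j⟫ ≤ 0 := by
    intro i j hi hj hij
    rw [huinner]
    have hne : g i ≠ g j := fun hc => hij (hginj i j hi hj hc)
    have := hobtuse _ (hgP i) _ (hgP j) hne
    have h1 : 0 ≤ ‖g i‖⁻¹ := by positivity
    have h2 : 0 ≤ ‖g j‖⁻¹ := by positivity
    nlinarith [mul_nonneg (mul_nonneg h1 h2) (neg_nonneg.mpr this)]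
  -- the "same vector up to period" facts
  have hmodper : ∀ i, i < d → g ((i + 1) % d) = g (i + 1) := by
    intro i hi
    rcases Nat.lt_or_ge (i + 1) d with h' | h'
    · rw [Nat.mod_eq_of_lt h']
    · have h1 : i + 1 = d := by omega
      rw [h1, Nat.mod_self]
      have := hper 0
      simpa using this.symm
  have humod : ∀ i, i < d → u ((i + 1) % d) = u (i + 1) := by
    intro i hi
    rw [hu]
    simp only [hmodper i hi]
  -- row sums are nonpositive
  have hrow : ∀ i ∈ Finset.range d, (∑ j ∈ Finset.range d, ⟪u i, u j⟫) ≤ 0 := by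
    intro i hi
    rw [Finset.mem_range] at hi
    set a := (i + 1) % d with hadef
    set b := (i + (d - 1)) % d with hbdef
    have ha : a < d := Nat.mod_lt _ (by omega)
    have hb : b < d := Nat.mod_lt _ (by omega)
    have hai : a ≠ i := by
      rcases Nat.lt_or_ge (i + 1) d with h' | h'
      · rw [hadef, Nat.mod_eq_of_lt h']; omega
      · have h1 : i + 1 = d := by omega
        rw [hadef, h1, Nat.mod_self]; omega
    have hbval : b = if i = 0 then d - 1 else i - 1 := by
      rcases Nat.eq_zero_or_pos i with rfl | h'
      · simp [hbdef, Nat.mod_eq_of_lt (by omega : 0 + (d - 1) < d)]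
      · have h1 : i + (d - 1) = (i - 1) + d := by omega
        rw [hbdef, h1, Nat.add_mod_right, Nat.mod_eq_of_lt (by omega)]
        simp [Nat.pos_iff_ne_zero.mp h']
    have haval : a = if i + 1 = d then 0 else i + 1 := by
      rcases Nat.lt_or_ge (i + 1) d with h' | h'
      · rw [hadef, Nat.mod_eq_of_lt h']
        rw [if_neg (by omega)]
      · have h1 : i + 1 = d := by omega
        rw [hadef, h1, Nat.mod_self]; simp [h1]
    have hbi : b ≠ i := by
      rw [hbval]; split <;> omega
    have hab : a ≠ b := by
      rw [haval, hbval]; split <;> split <;> omega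
    -- key bounds
    have hka : ⟪u i, u a⟫ ≤ -(1 / 2) := by
      rw [humod i hi]
      exact hneg i
    have hgb : g (b + 1) = g i := by
      rcases Nat.eq_zero_or_pos i with rfl | h'
      · have hb1 : b = d - 1 := by rw [hbval]; simp
        have h1 : b + 1 = 0 + d := by omega
        rw [h1, hper 0]
      · have hb1 : b = i - 1 := by rw [hbval]; rw [if_neg (by omega)]
        have h1 : b + 1 = i := by omega
        rw [h1]
    have hub : u (b + 1) = u i := by
      rw [hu]
      simp only [hgb]
    have hkb : ⟪u i, u b⟫ ≤ -(1 / 2) := by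
      rw [real_inner_comm, ← hub]
      exact hneg b
    have hsub : ({i, a, b} : Finset ℕ) ⊆ Finset.range d := by
      intro x hx
      simp only [Finset.mem_insert, Finset.mem_singleton] at hx
      rcases hx with rfl | rfl | rfl <;> simp [hi, ha, hb]
    have hsplit := Finset.sum_sdiff (f := fun j => ⟪u i, u j⟫) hsub
    have h3 : (∑ j ∈ ({i, a, b} : Finset ℕ), ⟪u i, u j⟫) = 1 + ⟪u i, u a⟫ + ⟪u i, u b⟫ := by
      rw [Finset.sum_insert (by simp [Ne.symm hai, Ne.symm hbi]),
        Finset.sum_insert (by simp [hab]), Finset.sum_singleton, huu]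
      ring
    have h4 : (∑ j ∈ Finset.range d \ {i, a, b}, ⟪u i, u j⟫) ≤ 0 := by
      apply Finset.sum_nonpos
      intro j hj
      rw [Finset.mem_sdiff, Finset.mem_range] at hj
      have hji : j ≠ i := by
        intro hc
        exact hj.2 (by simp [hc])
      exact hobt i j hi hj.1 (Ne.symm hji)
    linarith [hsplit, hka, hkb, h3, h4]
  -- the sum of the unit vectors is zero
  set S : E := ∑ j ∈ Finset.range d, u j with hS
  have hSS : ⟪S, S⟫ = ∑ i ∈ Finset.range d, ∑ j ∈ Finset.range d, ⟪u i, u j⟫ := by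
    rw [hS, sum_inner]
    refine Finset.sum_congr rfl fun i _ => ?_
    rw [inner_sum]
  have hSnonpos : ⟪S, S⟫ ≤ 0 := by
    rw [hSS]
    exact Finset.sum_nonpos hrow
  have hS0 : S = 0 := by
    have := real_inner_self_nonneg (x := S)
    have h5 : ⟪S, S⟫ = 0 := le_antisymm hSnonpos this
    exact inner_self_eq_zero.mp h5
  -- contradiction with linear independence
  have hd0 : 0 < d := by omega
  set G : Fin d → {x // x ∈ P} := fun i => ⟨g i, hgP i⟩ with hG
  have hGinj : Function.Injective G := by
    intro i j hij
    have : g i = g j := congrArg Subtype.val hij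
    exact Fin.ext (hginj i j i.isLt j.isLt this)
  have hli2 : LinearIndependent ℝ (fun i : Fin d => (G i : E)) := hli.comp G hGinj
  have hsum : (∑ i : Fin d, ‖g (i : ℕ)‖⁻¹ • (G i : E)) = 0 := by
    have h6 : (∑ i : Fin d, ‖g (i : ℕ)‖⁻¹ • (G i : E)) = ∑ j ∈ Finset.range d, u j := by
      rw [← Fin.sum_univ_eq_sum_range (fun j => u j) d]
    rw [h6, ← hS, hS0]
  have := Fintype.linearIndependent_iff.mp hli2 (fun i => ‖g (i : ℕ)‖⁻¹) hsum ⟨0, hd0⟩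
  exact absurd this (inv_ne_zero (hnorm 0).ne')

/-- Let `η` be an admissible map on a set `P` of simple roots, set
`Pη = {α ∈ P : η α α = 1}`, and let `P' ⊆ Pη` be a subset on which `ρ_η` is injective.
Then the family consisting of the vectors `ρ_η α` (for `α ∈ P'`) and `−ĕ_α`
(for `α ∈ Pη \ P'`) is a ℤ-basis of the lattice `ℤ^{Pη}` of integer-valued functions
on `Pη`.  In particular `S(P')` is linearly independent and the cone it generates is
regular. -/
theorem admissible_map_family_is_basis
    {E : Type*} [NormedAddCommGroup E] [InnerProductSpace ℝ E]
    (P : Finset E)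
    (h0 : ∀ α ∈ P, α ≠ (0 : E))
    (hli : LinearIndependent ℝ (fun a : P => (a : E)))
    (hobtuse : ∀ α ∈ P, ∀ β ∈ P, α ≠ β → ⟪α, β⟫ ≤ 0)
    (hcart : ∀ α ∈ P, ∀ β ∈ P, α ≠ β → ∃ n : ℤ, 2 * ⟪α, β⟫ / ⟪α, α⟫ = (n : ℝ))
    (η : E → E → ℤ)
    (hval : ∀ α ∈ P, ∀ β ∈ P, η α β ∈ ({-3, -2, -1, 0, 1} : Set ℤ))
    (am1 : ∀ α ∈ P, η α α = 0 ∨ η α α = 1)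
    (am2 : ∀ α ∈ P, η α α = 0 → ∀ β ∈ P, η α β = 0 ∧ η β α = 0)
    (am3 : ∀ α ∈ P, ∀ β ∈ P, η α β = 1 → ∀ γ ∈ P, η α γ = η β γ)
    (am4 : ∀ α ∈ P, ∀ β ∈ P, η α β < 0 → η β α = 0)
    (am5 : ∀ α ∈ P, ∀ β ∈ P, α ≠ β → 2 * ⟪α, β⟫ / ⟪α, α⟫ ≤ (η α β : ℝ))
    (Pη : Finset E) (hPη : ∀ α, α ∈ Pη ↔ α ∈ P ∧ η α α = 1)
    (P' : Finset E) (hP'sub : P' ⊆ Pη)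
    (hinj : ∀ α ∈ P', ∀ β ∈ P', (∀ γ ∈ Pη, η α γ = η β γ) → α = β) :
    ∃ B : Module.Basis {x // x ∈ Pη} ℤ ({x // x ∈ Pη} → ℤ),
      ∀ a : {x // x ∈ Pη},
        ((a : E) ∈ P' → ∀ γ : {x // x ∈ Pη}, B a γ = η (a : E) (γ : E)) ∧
        ((a : E) ∉ P' → ∀ γ : {x // x ∈ Pη}, B a γ = if γ = a then -1 else 0) := by
  classical
  set ι := {x // x ∈ Pη} with hι
  have hPηP : ∀ α ∈ Pη, α ∈ P := fun α hα => ((hPη α).1 hα).1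
  have hdiag : ∀ α ∈ Pη, η α α = 1 := fun α hα => ((hPη α).1 hα).2
  -- off-diagonal entries within `P'` are nonpositive
  have hP'le : ∀ α ∈ P', ∀ β ∈ P', α ≠ β → η α β ≤ 0 := by
    intro α hα β hβ hab
    by_contra hc
    push_neg at hc
    have h1 : η α β = 1 := by
      have := hval α (hPηP α (hP'sub hα)) β (hPηP β (hP'sub hβ))
      simp only [Set.mem_insert_iff, Set.mem_singleton_iff] at this
      omega
    have h2 := am3 α (hPηP α (hP'sub hα)) β (hPηP β (hP'sub hβ)) h1
    exact hab (hinj α hα β hβ (fun γ hγ => h2 γ (hPηP γ hγ)))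
  -- the matrix of the family
  set M : Matrix ι ι ℤ :=
    fun a γ => if (a : E) ∈ P' then η (a : E) (γ : E) else (if γ = a then -1 else 0) with hM
  -- the edge relation
  set Edge : ι → ι → Prop := fun a b => M a b ≠ 0 ∧ a ≠ b with hEdge
  -- every nonempty set of vertices has a sink
  have hsink : ∀ t : Finset ι, t.Nonempty → ∃ m ∈ t, ∀ y ∈ t, ¬ Edge m y := by
    intro t htne
    by_cases hex : ∃ m ∈ t, (m : E) ∉ P'
    · obtain ⟨m, hmt, hm⟩ := hex
      refine ⟨m, hmt, fun y _ hE => ?_⟩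
      obtain ⟨hne, hne'⟩ := hE
      rw [hM] at hne
      simp only [if_neg hm] at hne
      rw [if_neg (Ne.symm hne')] at hne
      exact hne rfl
    · push_neg at hex
      by_contra hc
      push_neg at hc
      -- every vertex of t has an out-edge inside t, for the strict relation
      have hstep : ∀ a ∈ t, ∃ b ∈ t, η (a : E) (b : E) < 0 := by
        intro a ha
        obtain ⟨b, hbt, hE⟩ := hc a ha
        obtain ⟨hne, hne'⟩ := hE
        rw [hM] at hne
        simp only [if_pos (hex a ha)] at hne
        have hsub : (a : E) ≠ (b : E) := fun hcc => hne' (Subtype.ext hcc.symm).symm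
        have := hP'le _ (hex a ha) _ (hex b hbt) hsub
        refine ⟨b, hbt, by omega⟩
      obtain ⟨d, g, hd0, hgt, hgE, hginj, hgper⟩ :=
        exists_simple_cycle t (fun a b : ι => η (a : E) (b : E) < 0) htne hstep
      -- consecutive vertices are distinct
      have hconsec : ∀ i, (g i : E) ≠ (g (i + 1) : E) := by
        intro i hcc
        have := hgE i
        rw [← hcc] at this
        have := hdiag _ (g i).2
        omega
      -- rule out short cycles
      rcases Nat.lt_or_ge d 3 with hdlt | hdge
      · interval_cases d
        · -- d = 1
          have h1 : g 1 = g 0 := by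
            have := hgper 0
            simpa using this
          exact hconsec 0 (by rw [h1])
        · -- d = 2
          have h2 : g 2 = g 0 := by
            have := hgper 0
            simpa using this
          have e1 := hgE 0
          have e2 := hgE 1
          rw [h2] at e2
          have := am4 _ (hPηP _ (g 0).2) _ (hPηP _ (g 1).2) e1
          omega
      · -- d ≥ 3 : geometric contradiction
        refine no_geometric_cycle P h0 hli hobtuse d hdge (fun i => (g i : E))
          (fun i => hPηP _ (g i).2)
          (fun i j hi hj hij => hginj i j hi hj (Subtype.ext hij))
          (fun i => by show ((g (i + d) : E)) = (g i : E); rw [hgper i]) (fun i => ?_)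
        -- the edge inequality
        set α := (g i : E) with hα
        set β := (g (i + 1) : E) with hβ
        have hαP : α ∈ P := hPηP _ (g i).2
        have hβP : β ∈ P := hPηP _ (g (i + 1)).2
        have hne : α ≠ β := hconsec i
        have hηneg : η α β < 0 := hgE i
        have hαβ1 : 2 * ⟪α, β⟫ / ⟪α, α⟫ ≤ -1 := by
          have h5 := am5 α hαP β hβP hne
          have : (η α β : ℝ) ≤ -1 := by exact_mod_cast (by omega : η α β ≤ -1)
          linarith
        have hαα : (0 : ℝ) < ⟪α, α⟫ := by
          rw [real_inner_self_eq_norm_mul_norm]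
          have : 0 < ‖α‖ := norm_pos_iff.mpr (h0 α hαP)
          positivity
        have hββ : (0 : ℝ) < ⟪β, β⟫ := by
          rw [real_inner_self_eq_norm_mul_norm]
          have : 0 < ‖β‖ := norm_pos_iff.mpr (h0 β hβP)
          positivity
        have h6 : ⟪α, β⟫ ≤ -⟪α, α⟫ / 2 := by
          rw [div_le_iff₀ hαα] at hαβ1
          linarith
        have h7 : ⟪α, β⟫ ≤ -⟪β, β⟫ / 2 := by
          obtain ⟨n, hn⟩ := hcart β hβP α hαP hne.symm
          have hba : ⟪β, α⟫ = ⟪α, β⟫ := real_inner_comm α β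
          have hratneg : 2 * ⟪β, α⟫ / ⟪β, β⟫ < 0 := by
            apply div_neg_of_neg_of_pos _ hββ
            rw [hba]
            nlinarith
          have hn1 : (n : ℝ) ≤ -1 := by
            rw [hn] at hratneg
            have : n < 0 := by exact_mod_cast hratneg
            exact_mod_cast (by omega : n ≤ -1)
          have h8 : 2 * ⟪β, α⟫ / ⟪β, β⟫ ≤ -1 := by rw [hn]; exact hn1
          rw [div_le_iff₀ hββ] at h8
          rw [hba] at h8
          linarith
        have hnα : (0:ℝ) < ‖α‖ := norm_pos_iff.mpr (h0 α hαP)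
        have hnβ : (0:ℝ) < ‖β‖ := norm_pos_iff.mpr (h0 β hβP)
        rw [real_inner_self_eq_norm_mul_norm] at h6
        rw [real_inner_self_eq_norm_mul_norm] at h7
        nlinarith [sq_nonneg (‖α‖ - ‖β‖)]
  -- topologically sort all of ι
  obtain ⟨l, hlnd, hlmem, hlpw⟩ :=
    topo_list Edge (Finset.univ : Finset ι)
      (fun t _ htne => hsink t htne)
  have hlfull : ∀ x : ι, x ∈ l := fun x => (hlmem x).2 (Finset.mem_univ x)
  set e : Fin l.length ≃ ι := hlnd.getEquivOfForallMemList l hlfull with he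
  -- triangularity
  have htri : (M.submatrix e e).BlockTriangular OrderDual.toDual := by
    intro i j hij
    have hij' : (i : ℕ) < (j : ℕ) := hij
    have hpw := (List.pairwise_iff_get.mp hlpw) i j hij'
    have hne : e i ≠ e j := fun hc => absurd (e.injective hc) (by
      intro hcc
      rw [hcc] at hij'
      exact lt_irrefl _ hij')
    rw [Matrix.submatrix_apply]
    by_contra hc
    exact hpw ⟨hc, hne⟩
  have hdet1 : IsUnit M.det := by
    have h1 : M.det = ∏ i : Fin l.length, (M.submatrix e e) i i := by
      rw [← Matrix.det_submatrix_equiv_self e M]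
      exact Matrix.det_of_lowerTriangular _ htri
    have h2 : ∀ i : Fin l.length, (M.submatrix e e) i i * (M.submatrix e e) i i = 1 := by
      intro i
      rw [Matrix.submatrix_apply, hM]
      by_cases hP : ((e i : ι) : E) ∈ P'
      · simp only [if_pos hP, hdiag _ (e i).2]
        norm_num
      · simp only [if_neg hP, if_pos rfl]
        norm_num
    have h3 : M.det * M.det = 1 := by
      rw [h1, ← Finset.prod_mul_distrib]
      simp only [h2]
      exact Finset.prod_const_one
    exact IsUnit.of_mul_eq_one _ h3
  have hdetT : IsUnit (Matrix.transpose M).det := by rwa [Matrix.det_transpose]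
  have hInv : Invertible (Matrix.transpose M) :=
    (Matrix.transpose M).invertibleOfIsUnitDet hdetT
  set B : Module.Basis ι ℤ (ι → ℤ) :=
    (Pi.basisFun ℤ ι).map ((Matrix.transpose M).toLinearEquiv' hInv) with hB
  have hBapp : ∀ a : ι, B a = M a := by
    intro a
    rw [hB, Module.Basis.map_apply, Pi.basisFun_apply]
    show Matrix.toLin' (Matrix.transpose M) (Pi.single a 1) = M a
    rw [Matrix.toLin'_apply, Matrix.mulVec_single_one]
    rfl
  refine ⟨B, fun a => ⟨fun haP γ => ?_, fun haP γ => ?_⟩⟩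
  · rw [hBapp a, hM]
    simp only [if_pos haP]
  · rw [hBapp a, hM]
    simp only [if_neg haP]
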